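/- arXiv:2111.04246 — 2 statements merged into one kernel-verified Lean document; each statement's English description precedes it below -/
import Mathlib

section
/- Let f be a Smale A-homeomorphism of a closed manifold Mⁿ all of whose source basic sets α(f) are trivial (finitely many locally hyperbolic source periodic points). Then the union of the source periodic orbits is a repelling set, and the set A(f) = ω(f) ∪ ⋃_{ν ∈ σ(f)} W^u(ν) is an attracting set, with B(α̃(f)) \ α̃(f) = B(A(f)) \ A(f), where B denotes basin. -/
open Filter Topology Set Metric

section Defs

variable {X : Type*} [MetricSpace X]

/-- The non-wandering set of a homeomorphism `f`. -/
def nonWanderingSet (f : X ≃ₜ X) : Set X :=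
  {p | ∀ U ∈ 𝓝 p, ∃ n : ℕ, 1 ≤ n ∧ ((⇑f)^[n] '' U ∩ U).Nonempty}

/-- The stable set `W^s(Λ)` of an invariant set `Λ`: points whose forward orbit
converges to `Λ`. -/
def stableSetOf (f : X ≃ₜ X) (Λ : Set X) : Set X :=
  {y | Tendsto (fun k => infDist ((⇑f)^[k] y) Λ) atTop (𝓝 0)}

/-- The unstable set `W^u(Λ)` of an invariant set `Λ`: the stable set for `f⁻¹`. -/
def unstableSetOf (f : X ≃ₜ X) (Λ : Set X) : Set X :=
  stableSetOf f.symm Λ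

/-- The full orbit of a point under `f`. -/
def fullOrbit (f : X ≃ₜ X) (p : X) : Set X :=
  Set.range fun k : ℤ => (f.toEquiv ^ k) p

/-- `U` is an open trapping region for `f`. -/
def IsTrappingRegion (f : X ≃ₜ X) (U : Set X) : Prop :=
  IsOpen U ∧ f '' closure U ⊆ U

/-- The attracting set determined by a trapping region `U`. -/
def attractingSetOf (f : X ≃ₜ X) (U : Set X) : Set X :=
  ⋂ k : ℕ, (⇑f)^[k] '' U

/-- `Λ` is an attracting set of `f`: the attracting set of some trapping region. -/
def IsAttractingSet (f : X ≃ₜ X) (Λ : Set X) : Prop :=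
  ∃ U, IsTrappingRegion f U ∧ Λ = attractingSetOf f U

/-- `Λ` is a repelling set of `f`: an attracting set of `f⁻¹`. -/
def IsRepellingSet (f : X ≃ₜ X) (Λ : Set X) : Prop :=
  IsAttractingSet f.symm Λ

/-- The basin of an attracting set `A`: the union of all open trapping regions `U`
with `A_U = A`. -/
def basinOf (f : X ≃ₜ X) (A : Set X) : Set X :=
  ⋃₀ {U | IsTrappingRegion f U ∧ attractingSetOf f U = A}

/-- Topological transitivity of `f` on `Λ`: some orbit in `Λ` is dense in `Λ`. -/
def IsTransitiveOn (f : X ≃ₜ X) (Λ : Set X) : Prop :=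
  ∃ x ∈ Λ, Λ ⊆ closure (fullOrbit f x)

/-- A spectral decomposition of a Smale A-homeomorphism `f`: the non-wandering set
is a finite disjoint union of closed invariant transitive basic sets (each
consisting of hyperbolic-type points, with periodic points dense), classified into
sink basic sets (`W^u(Λ) = Λ`), source basic sets (`W^s(Λ) = Λ`) and saddle basic
sets (neither). -/
structure SmaleDecomp (f : X ≃ₜ X) where
  /-- number of sink basic sets -/
  a : ℕ
  /-- number of source basic sets -/
  b : ℕ
  /-- number of saddle basic sets -/
  c : ℕ
  /-- the sink basic sets -/
  snk : Fin a → Set X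
  /-- the source basic sets -/
  src : Fin b → Set X
  /-- the saddle basic sets -/
  sad : Fin c → Set X
  snk_closed : ∀ i, IsClosed (snk i)
  src_closed : ∀ i, IsClosed (src i)
  sad_closed : ∀ i, IsClosed (sad i)
  snk_nonempty : ∀ i, (snk i).Nonempty
  src_nonempty : ∀ i, (src i).Nonempty
  sad_nonempty : ∀ i, (sad i).Nonempty
  snk_inv : ∀ i, f '' snk i = snk i
  src_inv : ∀ i, f '' src i = src i
  sad_inv : ∀ i, f '' sad i = sad i
  snk_trans : ∀ i, IsTransitiveOn f (snk i)
  src_trans : ∀ i, IsTransitiveOn f (src i)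
  sad_trans : ∀ i, IsTransitiveOn f (sad i)
  snk_pairwise : Pairwise (Function.onFun Disjoint snk)
  src_pairwise : Pairwise (Function.onFun Disjoint src)
  sad_pairwise : Pairwise (Function.onFun Disjoint sad)
  snk_src_disj : ∀ i j, Disjoint (snk i) (src j)
  snk_sad_disj : ∀ i j, Disjoint (snk i) (sad j)
  src_sad_disj : ∀ i j, Disjoint (src i) (sad j)
  nw_eq : nonWanderingSet f = (⋃ i, snk i) ∪ (⋃ i, src i) ∪ (⋃ i, sad i)
  snk_is_sink : ∀ i, unstableSetOf f (snk i) = snk i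
  src_is_source : ∀ i, stableSetOf f (src i) = src i
  sad_is_saddle : ∀ i, unstableSetOf f (sad i) ≠ sad i ∧ stableSetOf f (sad i) ≠ sad i

/-- The union of the source basic sets `α̃(f)`. -/
def SmaleDecomp.alphaUnion {f : X ≃ₜ X} (D : SmaleDecomp f) : Set X :=
  ⋃ i, D.src i

/-- The set `A(f) = ω(f) ∪ ⋃_{ν ∈ σ(f)} W^u(ν)`: the union of the sink basic sets
and of the unstable manifolds of the saddle basic sets. -/
def SmaleDecomp.Aset {f : X ≃ₜ X} (D : SmaleDecomp f) : Set X :=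
  (⋃ i, D.snk i) ∪ ⋃ i, unstableSetOf f (D.sad i)

/-- The set `R(f) = α(f) ∪ ⋃_{ν ∈ σ(f)} W^s(ν)`. -/
def SmaleDecomp.Rset {f : X ≃ₜ X} (D : SmaleDecomp f) : Set X :=
  (⋃ i, D.src i) ∪ ⋃ i, stableSetOf f (D.sad i)

/-- A basic set is trivial if it is an (isolated) periodic orbit, equivalently if
it is finite. -/
def TrivialFamily {n : ℕ} (Λ : Fin n → Set X) : Prop :=
  ∀ i, (Λ i).Finite

end Defs


open Filter Topology Set Metric

namespace SmaleAux

variable {X : Type*} [MetricSpace X]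

/-! ### Iterate helpers for homeomorphisms -/

lemma symm_iter_apply_iter (f : X ≃ₜ X) (k : ℕ) (x : X) :
    (⇑f.symm)^[k] ((⇑f)^[k] x) = x :=
  (Function.LeftInverse.iterate f.symm_apply_apply k) x

lemma iter_apply_symm_iter (f : X ≃ₜ X) (k : ℕ) (x : X) :
    (⇑f)^[k] ((⇑f.symm)^[k] x) = x :=
  (Function.LeftInverse.iterate f.apply_symm_apply k) x

lemma commute_symm (f : X ≃ₜ X) : Function.Commute ⇑f ⇑f.symm := by
  unfold Function.Commute Function.Semiconj
  intro x
  simp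

lemma iter_comm_symm_iter (f : X ≃ₜ X) (m k : ℕ) (x : X) :
    (⇑f)^[k] ((⇑f.symm)^[m] x) = (⇑f.symm)^[m] ((⇑f)^[k] x) :=
  (((commute_symm f).iterate_iterate k m) x)

/-- invariant set: image under iterates -/
lemma iter_image_inv {f : X ≃ₜ X} {Λ : Set X} (h : ⇑f '' Λ = Λ) (k : ℕ) :
    (⇑f)^[k] '' Λ = Λ := by
  induction k with
  | zero => simp
  | succ n ih => rw [Function.iterate_succ', Set.image_comp, ih, h]

lemma symm_image_inv {f : X ≃ₜ X} {Λ : Set X} (h : ⇑f '' Λ = Λ) :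
    ⇑f.symm '' Λ = Λ := by
  conv_lhs => rw [← h]
  rw [← Set.image_comp]
  simp

lemma symm_iter_image_inv {f : X ≃ₜ X} {Λ : Set X} (h : ⇑f '' Λ = Λ) (k : ℕ) :
    (⇑f.symm)^[k] '' Λ = Λ := by
  have := symm_image_inv h
  induction k with
  | zero => simp
  | succ n ih => rw [Function.iterate_succ', Set.image_comp, ih, this]

lemma mem_inv_iter {f : X ≃ₜ X} {Λ : Set X} (h : ⇑f '' Λ = Λ) {x : X} (hx : x ∈ Λ) (k : ℕ) :
    (⇑f)^[k] x ∈ Λ := by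
  rw [← iter_image_inv h k]; exact ⟨x, hx, rfl⟩

lemma mem_inv_symm_iter {f : X ≃ₜ X} {Λ : Set X} (h : ⇑f '' Λ = Λ) {x : X} (hx : x ∈ Λ) (k : ℕ) :
    (⇑f.symm)^[k] x ∈ Λ := by
  rw [← symm_iter_image_inv h k]; exact ⟨x, hx, rfl⟩

lemma iter_image_closure (f : X ≃ₜ X) (k : ℕ) (S : Set X) :
    (⇑f)^[k] '' closure S = closure ((⇑f)^[k] '' S) := by
  induction k with
  | zero => simp
  | succ n ih =>
      rw [Function.iterate_succ', Set.image_comp, ih, f.image_closure, Set.image_comp]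

lemma iter_bijective (f : X ≃ₜ X) (k : ℕ) : Function.Bijective ((⇑f)^[k]) :=
  Function.Bijective.iterate f.bijective k

lemma iter_isOpenMap (f : X ≃ₜ X) (k : ℕ) : IsOpenMap ((⇑f)^[k]) := by
  induction k with
  | zero => simpa using IsOpenMap.id
  | succ n ih => rw [Function.iterate_succ']; exact f.isOpenMap.comp ih

lemma iter_continuous (f : X ≃ₜ X) (k : ℕ) : Continuous ((⇑f)^[k]) :=
  f.continuous.iterate k


/-! ### Limit sets of orbits -/

/-- The set of limit points of the orbit of `x` under `T`. -/
def limPts (T : X → X) (x : X) : Set X := {y | MapClusterPt y atTop fun k => T^[k] x}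

lemma limPts_of_subseq {T : X → X} {x y : X} {φ : ℕ → ℕ} (hφ : StrictMono φ)
    (h : Tendsto (fun n => T^[φ n] x) atTop (𝓝 y)) : y ∈ limPts T x := by
  rw [limPts, mem_setOf_eq, mapClusterPt_iff_frequently]
  intro s hs
  have hev : ∀ᶠ n in atTop, T^[φ n] x ∈ s := h.eventually_mem hs
  exact hφ.tendsto_atTop.frequently hev.frequently

lemma limPts_freq {T : X → X} {x y : X} (h : y ∈ limPts T x) {ε : ℝ} (hε : 0 < ε) :
    ∃ᶠ k in atTop, dist (T^[k] x) y < ε := by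
  have := mapClusterPt_iff_frequently.1 h (ball y ε) (ball_mem_nhds y hε)
  simpa [mem_ball] using this

lemma limPts_nonempty [CompactSpace X] (T : X → X) (x : X) : (limPts T x).Nonempty := by
  obtain ⟨a, -, φ, hφ, ha⟩ := isCompact_univ.tendsto_subseq (x := fun k => T^[k] x)
    (fun n => mem_univ _)
  exact ⟨a, limPts_of_subseq hφ ha⟩

/-- limit points of an orbit eventually in a closed set lie in that set. -/
lemma limPts_subset_of_eventually {T : X → X} {x : X} {C : Set X} (hC : IsClosed C)
    (h : ∀ᶠ k in atTop, T^[k] x ∈ C) : limPts T x ⊆ C := by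
  intro y hy
  by_contra hyC
  have : ∃ᶠ k in atTop, T^[k] x ∈ Cᶜ :=
    mapClusterPt_iff_frequently.1 hy Cᶜ (hC.isOpen_compl.mem_nhds hyC)
  exact (this.and_eventually h).exists.elim fun k ⟨h1, h2⟩ => h1 h2

lemma limPts_mapsTo {T : X → X} (hT : Continuous T) {x y : X} (hy : y ∈ limPts T x) :
    T y ∈ limPts T x := by
  rw [limPts, mem_setOf_eq, mapClusterPt_iff_frequently]
  intro s hs
  have h1 : ∃ᶠ k in atTop, T^[k] x ∈ T ⁻¹' s :=
    mapClusterPt_iff_frequently.1 hy _ (hT.continuousAt.preimage_mem_nhds hs)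
  have h2 : ∃ᶠ k in atTop, T^[k+1] x ∈ s := by
    apply h1.mono
    intro k hk
    rw [Function.iterate_succ_apply']
    exact hk
  exact (tendsto_add_atTop_nat 1).frequently h2

lemma tendsto_infDist_limPts [CompactSpace X] {T : X → X} (x : X) :
    Tendsto (fun k => infDist (T^[k] x) (limPts T x)) atTop (𝓝 0) := by
  by_contra h
  obtain ⟨ε, hε, hfreq⟩ : ∃ ε > 0, ∃ᶠ k in atTop, ε ≤ infDist (T^[k] x) (limPts T x) := by
    rw [Metric.tendsto_atTop] at h
    push_neg at h
    obtain ⟨ε, hε, hN⟩ := h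
    refine ⟨ε, hε, frequently_atTop.2 fun N => ?_⟩
    obtain ⟨n, hn, hd⟩ := hN N
    refine ⟨n, hn, ?_⟩
    rwa [Real.dist_eq, sub_zero, abs_of_nonneg infDist_nonneg] at hd
  obtain ⟨φ, hφ, hφε⟩ := extraction_of_frequently_atTop hfreq
  obtain ⟨a, -, ψ, hψ, ha⟩ := isCompact_univ.tendsto_subseq (x := fun n => T^[φ n] x)
    (fun n => mem_univ _)
  have haL : a ∈ limPts T x := limPts_of_subseq (hφ.comp hψ) ha
  have : ε ≤ infDist a (limPts T x) := by
    refine ge_of_tendsto (((continuous_infDist_pt (limPts T x)).tendsto a).comp ha) ?_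
    exact Eventually.of_forall fun n => hφε (ψ n)
  rw [infDist_zero_of_mem haL] at this
  linarith

/-- if the limit set is inside a nonempty `Λ`, the orbit converges to `Λ`. -/
lemma tendsto_infDist_of_limPts_subset [CompactSpace X] {T : X → X} {x : X} {Λ : Set X}
    (h : limPts T x ⊆ Λ) :
    Tendsto (fun k => infDist (T^[k] x) Λ) atTop (𝓝 0) := by
  have hne : (limPts T x).Nonempty := limPts_nonempty T x
  exact squeeze_zero (fun k => infDist_nonneg)
    (fun k => infDist_le_infDist_of_subset h hne) (tendsto_infDist_limPts (T := T) x)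

/-- converse: if the orbit converges to a closed nonempty `Λ`, limit points lie in `Λ`. -/
lemma limPts_subset_of_tendsto {T : X → X} {x : X} {Λ : Set X} (hΛcl : IsClosed Λ)
    (hΛne : Λ.Nonempty) (h : Tendsto (fun k => infDist (T^[k] x) Λ) atTop (𝓝 0)) :
    limPts T x ⊆ Λ := by
  intro y hy
  have hinf : infDist y Λ = 0 := by
    refine le_antisymm (le_of_forall_pos_le_add fun ε hε => ?_) infDist_nonneg
    have h1 : ∀ᶠ k in atTop, infDist (T^[k] x) Λ < ε / 2 := by
      have := (Metric.tendsto_atTop.1 h) (ε / 2) (by linarith)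
      obtain ⟨N, hN⟩ := this
      filter_upwards [eventually_ge_atTop N] with k hk
      have := hN k hk
      rwa [Real.dist_eq, sub_zero, abs_of_nonneg infDist_nonneg] at this
    have h2 := (limPts_freq hy (show (0:ℝ) < ε / 2 by linarith)).and_eventually h1
    obtain ⟨k, hd, hi⟩ := h2.exists
    calc infDist y Λ ≤ infDist (T^[k] x) Λ + dist y (T^[k] x) := infDist_le_infDist_add_dist
      _ ≤ ε / 2 + ε / 2 := by rw [dist_comm]; exact add_le_add hi.le hd.le
      _ = 0 + ε := by ring
  rw [← hΛcl.closure_eq]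
  exact (mem_closure_iff_infDist_zero hΛne).2 hinf

end SmaleAux
namespace SmaleAux
variable {X : Type*} [MetricSpace X]

/-! ### Nonwandering set -/

lemma nonWanderingSet_symm_subset (f : X ≃ₜ X) :
    nonWanderingSet f.symm ⊆ nonWanderingSet f := by
  intro p hp U hU
  obtain ⟨n, hn1, z, ⟨u, hu, huz⟩, hzU⟩ := hp U hU
  refine ⟨n, hn1, u, ⟨z, hzU, ?_⟩, hu⟩
  rw [← huz, iter_apply_symm_iter]

lemma nonWanderingSet_symm (f : X ≃ₜ X) : nonWanderingSet f.symm = nonWanderingSet f := by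
  refine subset_antisymm (nonWanderingSet_symm_subset f) ?_
  have := nonWanderingSet_symm_subset f.symm
  rwa [Homeomorph.symm_symm] at this

lemma limPts_subset_nonWandering (f : X ≃ₜ X) (x : X) :
    limPts (⇑f) x ⊆ nonWanderingSet f := by
  intro y hy U hU
  have hU' : U ∈ 𝓝 y := hU
  have hfreq := mapClusterPt_iff_frequently.1 hy U hU'
  obtain ⟨k₁, -, hk₁⟩ := frequently_atTop.1 hfreq 0
  obtain ⟨k₂, hk₂ge, hk₂⟩ := frequently_atTop.1 hfreq (k₁ + 1)
  refine ⟨k₂ - k₁, by omega, (⇑f)^[k₂] x, ⟨(⇑f)^[k₁] x, hk₁, ?_⟩, hk₂⟩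
  rw [← Function.iterate_add_apply]
  congr 1
  omega

lemma limPts_symm_subset_nonWandering (f : X ≃ₜ X) (x : X) :
    limPts (⇑f.symm) x ⊆ nonWanderingSet f := by
  rw [← nonWanderingSet_symm f]
  exact limPts_subset_nonWandering f.symm x

/-! ### The single-basic-set lemma -/

/-- Pair dichotomy: if the limit set lies in `P ∪ Q` with `P, Q` disjoint closed
`T`-invariant sets and meets `P`, then it lies in `P`. -/
lemma limPts_pair [CompactSpace X] {T : X → X} (hT : Continuous T) {x : X} {P Q : Set X}
    (hP : IsClosed P) (hQ : IsClosed Q) (hPQ : Disjoint P Q)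
    (hTP : T '' P ⊆ P) (hsub : limPts T x ⊆ P ∪ Q)
    (hne : (limPts T x ∩ P).Nonempty) : limPts T x ⊆ P := by
  set L := limPts T x with hL
  intro y hy
  by_contra hyP
  have hyQ : y ∈ Q := (hsub hy).resolve_left hyP
  obtain ⟨p, hpL, hpP⟩ := hne
  -- separation of thickenings
  obtain ⟨δ, hδ, hdisj⟩ := hPQ.exists_thickenings hP.isCompact hQ
  -- uniform continuity
  obtain ⟨η, hη, hηc⟩ := Metric.uniformContinuous_iff.1
    (CompactSpace.uniformContinuous_of_continuous hT) (δ/2) (by linarith)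
  set ρ := min η (δ/2) with hρdef
  have hρ : 0 < ρ := lt_min hη (by linarith)
  have hρη : ρ ≤ η := min_le_left _ _
  have hρδ : ρ ≤ δ/2 := min_le_right _ _
  have hLne : L.Nonempty := ⟨p, hpL⟩
  -- eventually the orbit is ρ-close to L
  obtain ⟨K, hK⟩ := Metric.tendsto_atTop.1 (tendsto_infDist_limPts (T := T) x) ρ hρ
  have hclose : ∀ k ≥ K, ∃ l ∈ L, dist (T^[k] x) l < ρ := by
    intro k hk
    have := hK k hk
    rw [Real.dist_eq, sub_zero, abs_of_nonneg infDist_nonneg] at this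
    exact (infDist_lt_iff hLne).1 this
  -- a time near p, then a later time near y
  obtain ⟨k₁, hk₁K, hk₁⟩ := frequently_atTop.1 (limPts_freq hpL hρ) K
  obtain ⟨k₂, hk₂ge, hk₂⟩ := frequently_atTop.1 (limPts_freq hy hρ) k₁
  -- key separation facts
  have sep : ∀ a b : X, a ∈ P → b ∈ Q → ¬ dist a b < δ := by
    intro a b ha hb hab
    have h1 : a ∈ thickening δ P := self_subset_thickening hδ P ha
    have h2 : a ∈ thickening δ Q := mem_thickening_iff.2 ⟨b, hb, hab⟩
    exact (hdisj.ne_of_mem h1 h2) rfl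
  -- induction: the shadow stays in P
  have main : ∀ m, k₁ ≤ m → ∃ l ∈ L ∩ P, dist (T^[m] x) l < ρ := by
    intro m hm
    induction m, hm using Nat.le_induction with
    | base => exact ⟨p, ⟨hpL, hpP⟩, hk₁⟩
    | succ m hm ih =>
        obtain ⟨l, ⟨hlL, hlP⟩, hld⟩ := ih
        have hTl : T l ∈ L ∩ P := ⟨limPts_mapsTo hT hlL, hTP ⟨l, hlP, rfl⟩⟩
        have hTd : dist (T^[m+1] x) (T l) < δ/2 := by
          rw [Function.iterate_succ_apply']
          exact hηc (lt_of_lt_of_le hld hρη)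
        obtain ⟨l', hl'L, hl'd⟩ := hclose (m+1) (by omega)
        refine ⟨l', ⟨hl'L, ?_⟩, hl'd⟩
        rcases hsub hl'L with h | h
        · exact h
        · exfalso
          refine sep (T l) l' hTl.2 h ?_
          calc dist (T l) l' ≤ dist (T l) (T^[m+1] x) + dist (T^[m+1] x) l' := dist_triangle _ _ _
            _ < δ/2 + ρ := by rw [dist_comm]; exact add_lt_add hTd hl'd
            _ ≤ δ := by linarith
  obtain ⟨l, ⟨hlL, hlP⟩, hld⟩ := main k₂ hk₂ge
  refine sep l y hlP hyQ ?_
  calc dist l y ≤ dist l (T^[k₂] x) + dist (T^[k₂] x) y := dist_triangle _ _ _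
    _ < ρ + ρ := by rw [dist_comm]; exact add_lt_add hld hk₂
    _ ≤ δ := by linarith

/-- the limit set lies in a single member of a finite disjoint invariant family. -/
lemma limPts_single [CompactSpace X] {T : X → X} (hT : Continuous T) {x : X}
    {ι : Type*} [Finite ι] {Λ : ι → Set X} (hcl : ∀ i, IsClosed (Λ i))
    (hdis : Pairwise (Function.onFun Disjoint Λ)) (hinv : ∀ i, T '' Λ i ⊆ Λ i)
    (hsub : limPts T x ⊆ ⋃ i, Λ i) : ∃ i, limPts T x ⊆ Λ i := by
  obtain ⟨y, hy⟩ := limPts_nonempty T x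
  obtain ⟨i, hyi⟩ := mem_iUnion.1 (hsub hy)
  refine ⟨i, ?_⟩
  have hQcl : IsClosed (⋃ j : {j // j ≠ i}, Λ j.1) :=
    isClosed_iUnion_of_finite fun j => hcl j.1
  have hdisj : Disjoint (Λ i) (⋃ j : {j // j ≠ i}, Λ j.1) := by
    rw [Set.disjoint_iUnion_right]
    exact fun j => hdis (Ne.symm j.2)
  have hsub' : limPts T x ⊆ Λ i ∪ ⋃ j : {j // j ≠ i}, Λ j.1 := by
    intro z hz
    obtain ⟨j, hj⟩ := mem_iUnion.1 (hsub hz)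
    by_cases hji : j = i
    · exact Or.inl (hji ▸ hj)
    · exact Or.inr (mem_iUnion.2 ⟨⟨j, hji⟩, hj⟩)
  exact limPts_pair hT (hcl i) hQcl hdisj (hinv i) hsub' ⟨y, hy, hyi⟩

end SmaleAux
namespace SmaleAux
variable {X : Type*} [MetricSpace X]

/-! ### Trapping regions -/

lemma trap_image_subset {h : X ≃ₜ X} {W : Set X} (hW : IsTrappingRegion h W) :
    ⇑h '' W ⊆ W :=
  (Set.image_mono  subset_closure).trans hW.2

lemma trap_iter_image_subset {h : X ≃ₜ X} {W : Set X} (hW : IsTrappingRegion h W) (k : ℕ) :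
    (⇑h)^[k] '' W ⊆ W := by
  induction k with
  | zero => simp
  | succ n ih =>
      rw [Function.iterate_succ', Set.image_comp]
      exact (Set.image_mono  ih).trans (trap_image_subset hW)

lemma mem_attractingSetOf_iff {h : X ≃ₜ X} {S : Set X} {x : X} :
    x ∈ attractingSetOf h S ↔ ∀ k, (⇑h.symm)^[k] x ∈ S := by
  rw [attractingSetOf, Set.mem_iInter]
  constructor
  · intro hx k
    obtain ⟨u, hu, huk⟩ := hx k
    rwa [← huk, symm_iter_apply_iter]
  · intro hx k
    exact ⟨(⇑h.symm)^[k] x, hx k, iter_apply_symm_iter h k x⟩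

lemma attractor_subset {h : X ≃ₜ X} {S : Set X} : attractingSetOf h S ⊆ S := by
  intro x hx
  simpa using (Set.mem_iInter.1 hx 0)

lemma attractor_inv {h : X ≃ₜ X} {W : Set X} (hW : IsTrappingRegion h W) :
    ⇑h '' attractingSetOf h W = attractingSetOf h W := by
  have himg : ⇑h '' attractingSetOf h W = ⋂ k, (⇑h)^[k+1] '' W := by
    simp only [attractingSetOf]
    rw [Set.image_iInter h.bijective]
    exact Set.iInter_congr fun k => by rw [Function.iterate_succ', Set.image_comp]
  rw [himg]
  apply subset_antisymm
  · intro x hx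
    rw [Set.mem_iInter] at hx
    simp only [attractingSetOf, Set.mem_iInter]
    intro k
    cases k with
    | zero =>
        simpa using trap_iter_image_subset hW 1 (by simpa using hx 0)
    | succ n => exact hx n
  · intro x hx
    exact Set.mem_iInter.2 fun k => Set.mem_iInter.1 hx (k+1)

lemma limPts_subset_attractor [CompactSpace X] {h : X ≃ₜ X} {W : Set X}
    (hW : IsTrappingRegion h W) {x : X} (hx : x ∈ W) :
    limPts (⇑h) x ⊆ attractingSetOf h W := by
  intro y hy
  rw [attractingSetOf, Set.mem_iInter]
  intro m
  have hev : ∀ᶠ k in atTop, (⇑h)^[k] x ∈ (⇑h)^[m+1] '' closure W := by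
    filter_upwards [eventually_ge_atTop (m+1)] with k hk
    have hrw : (⇑h)^[k] x = (⇑h)^[m+1] ((⇑h)^[k-(m+1)] x) := by
      rw [← Function.iterate_add_apply]
      congr 1
      omega
    rw [hrw]
    exact ⟨(⇑h)^[k-(m+1)] x, subset_closure (trap_iter_image_subset hW _ ⟨x, hx, rfl⟩), rfl⟩
  have h1 : limPts (⇑h) x ⊆ (⇑h)^[m+1] '' closure W := by
    apply limPts_subset_of_eventually _ hev
    rw [iter_image_closure]; exact isClosed_closure
  have h2 : (⇑h)^[m+1] '' closure W ⊆ (⇑h)^[m] '' W := by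
    rw [Function.iterate_succ, Set.image_comp]
    exact Set.image_mono  hW.2
  exact h2 (h1 hy)

lemma trap_nonempty_attractor [CompactSpace X] {h : X ≃ₜ X} {W : Set X}
    (hW : IsTrappingRegion h W) (hne : W.Nonempty) : (attractingSetOf h W).Nonempty := by
  have hKne : (⋂ k, (⇑h)^[k] '' closure W).Nonempty := by
    apply IsCompact.nonempty_iInter_of_sequence_nonempty_isCompact_isClosed
    · intro k
      rw [Function.iterate_succ, Set.image_comp]
      exact (Set.image_mono  (hW.2.trans subset_closure))
    · intro k
      exact (hne.mono subset_closure).image _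
    · exact (isClosed_closure.isCompact.image (iter_continuous h 0))
    · intro k
      rw [iter_image_closure]; exact isClosed_closure
  obtain ⟨y, hy⟩ := hKne
  refine ⟨y, Set.mem_iInter.2 fun k => ?_⟩
  have hmem := Set.mem_iInter.1 hy (k+1)
  rw [Function.iterate_succ, Set.image_comp] at hmem
  obtain ⟨u, hu, huy⟩ := hmem
  exact ⟨u, hW.2 hu, huy⟩

lemma dual_trap {h : X ≃ₜ X} {U : Set X} (hU : IsTrappingRegion h.symm U) :
    IsTrappingRegion h (closure U)ᶜ := by
  refine ⟨isClosed_closure.isOpen_compl, ?_⟩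
  rintro z ⟨y, hy, rfl⟩
  intro hz
  have h1 : ⇑h.symm (⇑h y) ∈ U := hU.2 ⟨⇑h y, hz, rfl⟩
  rw [h.symm_apply_apply] at h1
  have h2 : closure ((closure U)ᶜ) ⊆ Uᶜ :=
    closure_minimal (Set.compl_subset_compl.2 subset_closure) hU.1.isClosed_compl
  exact (h2 hy) h1

lemma symm_iter_comm_apply (h : X ≃ₜ X) (K : ℕ) (z : X) :
    ⇑h ((⇑h.symm)^[K] z) = (⇑h.symm)^[K] (⇑h z) := by
  have := iter_comm_symm_iter h K 1 z
  simpa using this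

lemma trap_pushforward {h : X ≃ₜ X} {W : Set X} (hW : IsTrappingRegion h W) (K : ℕ) :
    IsTrappingRegion h ((⇑h.symm)^[K] '' W) := by
  refine ⟨iter_isOpenMap h.symm K W hW.1, ?_⟩
  have hcl : closure ((⇑h.symm)^[K] '' W) = (⇑h.symm)^[K] '' closure W :=
    (iter_image_closure h.symm K W).symm
  have hcomp : ⇑h ∘ (⇑h.symm)^[K] = (⇑h.symm)^[K] ∘ ⇑h :=
    funext fun z => symm_iter_comm_apply h K z
  rw [hcl, ← Set.image_comp, hcomp, Set.image_comp]
  exact Set.image_mono  hW.2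

lemma attractor_pushforward {h : X ≃ₜ X} (W : Set X) (K : ℕ) :
    attractingSetOf h ((⇑h.symm)^[K] '' W) = (⇑h.symm)^[K] '' attractingSetOf h W := by
  simp only [attractingSetOf]
  rw [Set.image_iInter (iter_bijective h.symm K)]
  refine Set.iInter_congr fun k => ?_
  have hcomp : (⇑h)^[k] ∘ (⇑h.symm)^[K] = (⇑h.symm)^[K] ∘ (⇑h)^[k] :=
    funext fun z => iter_comm_symm_iter h K k z
  rw [← Set.image_comp, hcomp, Set.image_comp]

end SmaleAux
namespace SmaleAux
variable {X : Type*} [MetricSpace X]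

/-! ### Invariance of stable sets -/

lemma stable_mem_iff (f : X ≃ₜ X) (Λ : Set X) (x : X) :
    f x ∈ stableSetOf f Λ ↔ x ∈ stableSetOf f Λ := by
  simp only [stableSetOf, mem_setOf_eq]
  have hrw : (fun k => infDist ((⇑f)^[k] (f x)) Λ) = fun k => infDist ((⇑f)^[k+1] x) Λ := by
    funext k
    rw [Function.iterate_succ_apply]
  rw [hrw]
  exact @tendsto_add_atTop_iff_nat ℝ (fun k => infDist ((⇑f)^[k] x) Λ) (𝓝 0) 1

lemma stable_symm_mem_iff (f : X ≃ₜ X) (Λ : Set X) (x : X) :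
    f x ∈ stableSetOf f.symm Λ ↔ x ∈ stableSetOf f.symm Λ := by
  simp only [stableSetOf, mem_setOf_eq]
  have hrw : (fun k => infDist ((⇑f.symm)^[k] (f x)) Λ) ∘ (· + 1) =
      fun k => infDist ((⇑f.symm)^[k] x) Λ := by
    funext k
    simp only [Function.comp_apply]
    rw [Function.iterate_succ_apply, f.symm_apply_apply]
  constructor
  · intro h
    rw [← hrw]
    exact h.comp (tendsto_add_atTop_nat 1)
  · intro h
    have h2 : Tendsto (fun n => infDist ((⇑f.symm)^[n+1] (f x)) Λ) atTop (𝓝 0) := by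
      have heq : (fun n => infDist ((⇑f.symm)^[n+1] (f x)) Λ) =
          fun k => infDist ((⇑f.symm)^[k] x) Λ := by
        funext k
        rw [Function.iterate_succ_apply, f.symm_apply_apply]
      rw [heq]
      exact h
    exact (@tendsto_add_atTop_iff_nat ℝ (fun k => infDist ((⇑f.symm)^[k] (f x)) Λ) (𝓝 0) 1).1 h2

lemma image_eq_of_mem_iff {g : X ≃ₜ X} {S : Set X} (h : ∀ x, g x ∈ S ↔ x ∈ S) :
    ⇑g '' S = S := by
  ext z
  constructor
  · rintro ⟨y, hy, rfl⟩
    exact (h y).2 hy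
  · intro hz
    refine ⟨g.symm z, ?_, g.apply_symm_apply z⟩
    rw [← (h (g.symm z)), g.apply_symm_apply]
    exact hz

lemma image_unstable_eq (f : X ≃ₜ X) (Λ : Set X) :
    ⇑f '' unstableSetOf f Λ = unstableSetOf f Λ :=
  image_eq_of_mem_iff fun x => stable_symm_mem_iff f Λ x

/-! ### SmaleDecomp basics -/

variable {f : X ≃ₜ X}

lemma alpha_closed (D : SmaleDecomp f) : IsClosed D.alphaUnion :=
  isClosed_iUnion_of_finite D.src_closed

lemma alpha_inv (D : SmaleDecomp f) : ⇑f '' D.alphaUnion = D.alphaUnion := by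
  rw [SmaleDecomp.alphaUnion, Set.image_iUnion]
  exact Set.iUnion_congr D.src_inv

lemma Aset_inv (D : SmaleDecomp f) : ⇑f '' D.Aset = D.Aset := by
  rw [SmaleDecomp.Aset, Set.image_union, Set.image_iUnion, Set.image_iUnion]
  congr 1
  · exact Set.iUnion_congr D.snk_inv
  · exact Set.iUnion_congr fun i => image_unstable_eq f (D.sad i)

lemma alpha_finite (D : SmaleDecomp f) (hsrc : TrivialFamily D.src) : D.alphaUnion.Finite :=
  Set.finite_iUnion hsrc

/-! ### Classification of orbits -/

lemma classify [CompactSpace X] (D : SmaleDecomp f) {T : X → X} (hT : Continuous T)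
    (hinv_snk : ∀ i, T '' D.snk i ⊆ D.snk i) (hinv_src : ∀ i, T '' D.src i ⊆ D.src i)
    (hinv_sad : ∀ i, T '' D.sad i ⊆ D.sad i)
    {x : X} (hsub : limPts T x ⊆ nonWanderingSet f) :
    (∃ i, limPts T x ⊆ D.snk i) ∨ (∃ i, limPts T x ⊆ D.src i) ∨
      (∃ i, limPts T x ⊆ D.sad i) := by
  set Λ : (Fin D.a ⊕ (Fin D.b ⊕ Fin D.c)) → Set X :=
    Sum.elim D.snk (Sum.elim D.src D.sad) with hΛ
  have hcl : ∀ i, IsClosed (Λ i) := by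
    rintro (i | i | i)
    exacts [D.snk_closed i, D.src_closed i, D.sad_closed i]
  have hdis : Pairwise (Function.onFun Disjoint Λ) := by
    rintro (i | i | i) (j | j | j) hne <;>
      simp only [Function.onFun, hΛ, Sum.elim_inl, Sum.elim_inr]
    · exact D.snk_pairwise (by rintro rfl; exact hne rfl)
    · exact D.snk_src_disj i j
    · exact D.snk_sad_disj i j
    · exact (D.snk_src_disj j i).symm
    · exact D.src_pairwise (by rintro rfl; exact hne rfl)
    · exact D.src_sad_disj i j
    · exact (D.snk_sad_disj j i).symm
    · exact (D.src_sad_disj j i).symm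
    · exact D.sad_pairwise (by rintro rfl; exact hne rfl)
  have hinv : ∀ i, T '' Λ i ⊆ Λ i := by
    rintro (i | i | i)
    exacts [hinv_snk i, hinv_src i, hinv_sad i]
  have hsub' : limPts T x ⊆ ⋃ i, Λ i := by
    intro z hz
    have hmem := hsub hz
    rw [D.nw_eq] at hmem
    rcases hmem with (h | h) | h
    · obtain ⟨i, hi⟩ := mem_iUnion.1 h
      exact mem_iUnion.2 ⟨Sum.inl i, hi⟩
    · obtain ⟨i, hi⟩ := mem_iUnion.1 h
      exact mem_iUnion.2 ⟨Sum.inr (Sum.inl i), hi⟩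
    · obtain ⟨i, hi⟩ := mem_iUnion.1 h
      exact mem_iUnion.2 ⟨Sum.inr (Sum.inr i), hi⟩
  obtain ⟨i, hi⟩ := limPts_single hT hcl hdis hinv hsub'
  rcases i with i | i | i
  · exact Or.inl ⟨i, hi⟩
  · exact Or.inr (Or.inl ⟨i, hi⟩)
  · exact Or.inr (Or.inr ⟨i, hi⟩)

lemma classify_forward [CompactSpace X] (D : SmaleDecomp f) (x : X) :
    (∃ i, limPts (⇑f) x ⊆ D.snk i) ∨ (∃ i, limPts (⇑f) x ⊆ D.src i) ∨
      (∃ i, limPts (⇑f) x ⊆ D.sad i) :=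
  classify D f.continuous (fun i => (D.snk_inv i).le) (fun i => (D.src_inv i).le)
    (fun i => (D.sad_inv i).le) (limPts_subset_nonWandering f x)

lemma classify_backward [CompactSpace X] (D : SmaleDecomp f) (x : X) :
    (∃ i, limPts (⇑f.symm) x ⊆ D.snk i) ∨ (∃ i, limPts (⇑f.symm) x ⊆ D.src i) ∨
      (∃ i, limPts (⇑f.symm) x ⊆ D.sad i) :=
  classify D f.symm.continuous (fun i => (symm_image_inv (D.snk_inv i)).le)
    (fun i => (symm_image_inv (D.src_inv i)).le) (fun i => (symm_image_inv (D.sad_inv i)).le)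
    (limPts_symm_subset_nonWandering f x)

/-! ### Consequences of the sink/source axioms -/

lemma mem_snk_of_backward [CompactSpace X] (D : SmaleDecomp f) {x : X} {i : Fin D.a}
    (h : limPts (⇑f.symm) x ⊆ D.snk i) : x ∈ D.snk i := by
  rw [← D.snk_is_sink i]
  exact tendsto_infDist_of_limPts_subset h

lemma mem_src_of_forward [CompactSpace X] (D : SmaleDecomp f) {x : X} {i : Fin D.b}
    (h : limPts (⇑f) x ⊆ D.src i) : x ∈ D.src i := by
  rw [← D.src_is_source i]
  exact tendsto_infDist_of_limPts_subset h

lemma mem_Aset_of_backward_sad [CompactSpace X] (D : SmaleDecomp f) {x : X} {i : Fin D.c}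
    (h : limPts (⇑f.symm) x ⊆ D.sad i) : x ∈ D.Aset :=
  Or.inr (mem_iUnion.2 ⟨i, tendsto_infDist_of_limPts_subset h⟩)

lemma snk_subset_Aset (D : SmaleDecomp f) (i : Fin D.a) : D.snk i ⊆ D.Aset :=
  fun x hx => Or.inl (mem_iUnion.2 ⟨i, hx⟩)

/-- every point of a source component has its backward limit set inside it. -/
lemma backward_limPts_of_mem_src (D : SmaleDecomp f) {x : X} {i : Fin D.b}
    (hx : x ∈ D.src i) : limPts (⇑f.symm) x ⊆ D.src i :=
  limPts_subset_of_eventually (D.src_closed i)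
    (Eventually.of_forall fun k => mem_inv_symm_iter (D.src_inv i) hx k)

lemma backward_limPts_of_mem_snk (D : SmaleDecomp f) {x : X} {i : Fin D.a}
    (hx : x ∈ D.snk i) : limPts (⇑f.symm) x ⊆ D.snk i :=
  limPts_subset_of_eventually (D.snk_closed i)
    (Eventually.of_forall fun k => mem_inv_symm_iter (D.snk_inv i) hx k)

lemma forward_limPts_of_mem_src (D : SmaleDecomp f) {x : X} {i : Fin D.b}
    (hx : x ∈ D.src i) : limPts (⇑f) x ⊆ D.src i :=
  limPts_subset_of_eventually (D.src_closed i)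
    (Eventually.of_forall fun k => mem_inv_iter (D.src_inv i) hx k)

/-- `α̃(f)` and `A(f)` are disjoint. -/
lemma alpha_disj_Aset [CompactSpace X] (D : SmaleDecomp f) :
    ∀ x, x ∈ D.alphaUnion → x ∉ D.Aset := by
  intro x hxA hxAset
  obtain ⟨i, hi⟩ := mem_iUnion.1 hxA
  have hL : limPts (⇑f.symm) x ⊆ D.src i := backward_limPts_of_mem_src D hi
  have hLne : (limPts (⇑f.symm) x).Nonempty := limPts_nonempty _ x
  rcases hxAset with h | h
  · obtain ⟨j, hj⟩ := mem_iUnion.1 h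
    exact (D.snk_src_disj j i).ne_of_mem hj hi rfl
  · obtain ⟨j, hj⟩ := mem_iUnion.1 h
    have hL2 : limPts (⇑f.symm) x ⊆ D.sad j :=
      limPts_subset_of_tendsto (D.sad_closed j) (D.sad_nonempty j) hj
    obtain ⟨y, hy⟩ := hLne
    exact (D.src_sad_disj i j).ne_of_mem (hL hy) (hL2 hy) rfl

end SmaleAux
namespace SmaleAux
variable {X : Type*} [MetricSpace X] {f : X ≃ₜ X}

/-! ### Separation of `α̃` from the other basic sets -/

lemma sep_exists [CompactSpace X] (D : SmaleDecomp f) (hAne : D.alphaUnion.Nonempty) :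
    ∃ ε₀ > 0, ∀ z, infDist z D.alphaUnion ≤ ε₀ →
      (∀ i, z ∉ D.snk i) ∧ (∀ i, z ∉ D.sad i) := by
  set S2 : Set X := (⋃ i, D.snk i) ∪ ⋃ i, D.sad i with hS2
  have hS2cl : IsClosed S2 :=
    (isClosed_iUnion_of_finite D.snk_closed).union (isClosed_iUnion_of_finite D.sad_closed)
  have hdisj : Disjoint D.alphaUnion S2 := by
    rw [SmaleDecomp.alphaUnion, Set.disjoint_iUnion_left]
    intro i
    rw [hS2, Set.disjoint_union_right]
    constructor
    · rw [Set.disjoint_iUnion_right]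
      exact fun j => (D.snk_src_disj j i).symm
    · rw [Set.disjoint_iUnion_right]
      exact fun j => D.src_sad_disj i j
  obtain ⟨δ₀, hδ₀, hth⟩ := hdisj.exists_thickenings (alpha_closed D).isCompact hS2cl
  refine ⟨δ₀ / 2, by linarith, fun z hz => ?_⟩
  have hzA : z ∈ thickening δ₀ D.alphaUnion :=
    (mem_thickening_iff_infDist_lt hAne).2 (by linarith)
  have key : z ∉ S2 := by
    intro hzS
    exact (hth.ne_of_mem hzA (self_subset_thickening hδ₀ S2 hzS)) rfl
  constructor
  · intro i hi
    exact key (Or.inl (mem_iUnion.2 ⟨i, hi⟩))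
  · intro i hi
    exact key (Or.inr (mem_iUnion.2 ⟨i, hi⟩))

/-! ### Absorption -/

lemma absorption [CompactSpace X] (D : SmaleDecomp f) {ε₀ : ℝ}
    (hsep : ∀ z, infDist z D.alphaUnion ≤ ε₀ →
      (∀ i, z ∉ D.snk i) ∧ (∀ i, z ∉ D.sad i)) :
    ∀ y, (∀ j, infDist ((⇑f)^[j] y) D.alphaUnion ≤ ε₀) → y ∈ D.alphaUnion := by
  intro y hy
  have hC : IsClosed {z | infDist z D.alphaUnion ≤ ε₀} :=
    isClosed_le (continuous_infDist_pt _) continuous_const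
  have hLC : limPts (⇑f) y ⊆ {z | infDist z D.alphaUnion ≤ ε₀} :=
    limPts_subset_of_eventually hC (Eventually.of_forall hy)
  obtain ⟨w, hw⟩ := limPts_nonempty (⇑f) y
  rcases classify_forward D y with ⟨i, hi⟩ | ⟨i, hi⟩ | ⟨i, hi⟩
  · exact absurd (hi hw) ((hsep w (hLC hw)).1 i)
  · exact mem_iUnion.2 ⟨i, mem_src_of_forward D hi⟩
  · exact absurd (hi hw) ((hsep w (hLC hw)).2 i)

/-! ### Uniform attraction -/

lemma uniform_attract [CompactSpace X] {g : X → X} (hg : Continuous g) {K V : Set X}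
    (hK : IsCompact K) (hV : IsOpen V) (h : ∀ x ∈ K, ∃ n, g^[n] x ∈ V) :
    ∃ N, ∀ x ∈ K, ∃ n ≤ N, g^[n] x ∈ V := by
  classical
  set nf : X → ℕ := fun x => if hx : ∃ n, g^[n] x ∈ V then Nat.find hx else 0 with hnf
  have hmem : ∀ x ∈ K, g^[nf x] x ∈ V := by
    intro x hx
    have hex := h x hx
    simp only [hnf, dif_pos hex]
    exact Nat.find_spec hex
  have hcov : K ⊆ ⋃ x : K, (g^[nf x.1]) ⁻¹' V := by
    intro x hx
    exact mem_iUnion.2 ⟨⟨x, hx⟩, hmem x hx⟩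
  obtain ⟨t, ht⟩ := hK.elim_finite_subcover (fun x : K => (g^[nf x.1]) ⁻¹' V)
    (fun x => hV.preimage (hg.iterate _)) hcov
  refine ⟨t.sup fun x => nf x.1, fun x hx => ?_⟩
  obtain ⟨x₀, hx₀t, hx₀⟩ := Set.mem_iUnion₂.1 (ht hx)
  exact ⟨nf x₀.1, Finset.le_sup (f := fun x : K => nf x.1) hx₀t, hx₀⟩

end SmaleAux
namespace SmaleAux
variable {X : Type*} [MetricSpace X] {f : X ≃ₜ X}

lemma stability [CompactSpace X] (D : SmaleDecomp f) (hAne : D.alphaUnion.Nonempty) {ε₀ : ℝ}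
    (hsep : ∀ z, infDist z D.alphaUnion ≤ ε₀ →
      (∀ i, z ∉ D.snk i) ∧ (∀ i, z ∉ D.sad i)) :
    ∀ ε', 0 < ε' → ε' ≤ ε₀ → ∃ δ, 0 < δ ∧ δ < ε' ∧
      ∀ x, infDist x D.alphaUnion < δ →
        ∀ k, infDist ((⇑f.symm)^[k] x) D.alphaUnion < ε' := by
  classical
  intro ε' hε' hε'ε₀
  by_contra hcon
  push_neg at hcon
  have hchoice : ∀ n : ℕ, ∃ x, infDist x D.alphaUnion < ε' / (n + 2) ∧
      ∃ k, ε' ≤ infDist ((⇑f.symm)^[k] x) D.alphaUnion := by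
    intro n
    have h2 : (0:ℝ) < (n:ℝ) + 2 := by positivity
    have h1 : (1:ℝ) < (n:ℝ) + 2 := by
      have : (0:ℝ) ≤ (n:ℝ) := Nat.cast_nonneg n
      linarith
    exact hcon (ε' / (n + 2)) (by positivity) ((div_lt_self hε' h1))
  choose x hx hex using hchoice
  have htpos : ∀ n, 1 ≤ Nat.find (hex n) := by
    intro n
    rcases Nat.eq_zero_or_pos (Nat.find (hex n)) with h0 | h1
    · exfalso
      have hspec := Nat.find_spec (hex n)
      rw [h0] at hspec
      simp only [Function.iterate_zero, id_eq] at hspec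
      have h2 : (0:ℝ) < (n:ℝ) + 2 := by positivity
      have h1 : (1:ℝ) < (n:ℝ) + 2 := by
        have : (0:ℝ) ≤ (n:ℝ) := Nat.cast_nonneg n
        linarith
      have := (hx n).trans (div_lt_self hε' h1)
      linarith
    · exact h1
  set t : ℕ → ℕ := fun n => Nat.find (hex n) with htdef
  have ht : ∀ n, ε' ≤ infDist ((⇑f.symm)^[t n] (x n)) D.alphaUnion :=
    fun n => Nat.find_spec (hex n)
  have htmin : ∀ n j, j < t n → infDist ((⇑f.symm)^[j] (x n)) D.alphaUnion < ε' := by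
    intro n j hj
    have := Nat.find_min (hex n) hj
    push_neg at this
    exact this
  by_cases hT : Tendsto t atTop atTop
  · -- exit times go to infinity
    obtain ⟨ys, -, φ, hφ, hys⟩ := isCompact_univ.tendsto_subseq
      (x := fun n => (⇑f.symm)^[t n] (x n)) (fun n => mem_univ _)
    have hyinf : ε' ≤ infDist ys D.alphaUnion :=
      ge_of_tendsto (((continuous_infDist_pt D.alphaUnion).tendsto ys).comp hys)
        (Eventually.of_forall fun n => ht (φ n))
    have hforward : ∀ j, infDist ((⇑f)^[j+1] ys) D.alphaUnion ≤ ε' := by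
      intro j
      have hev : ∀ᶠ n in atTop, j + 1 ≤ t (φ n) :=
        (hT.comp hφ.tendsto_atTop).eventually_ge_atTop (j+1)
      have hlim : Tendsto (fun n => (⇑f)^[j+1] ((⇑f.symm)^[t (φ n)] (x (φ n)))) atTop
          (𝓝 ((⇑f)^[j+1] ys)) :=
        ((iter_continuous f (j+1)).tendsto ys).comp hys
      refine le_of_tendsto (((continuous_infDist_pt D.alphaUnion).tendsto _).comp hlim) ?_
      filter_upwards [hev] with n hn
      show infDist ((⇑f)^[j+1] ((⇑f.symm)^[t (φ n)] (x (φ n)))) D.alphaUnion ≤ ε'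
      have h1 : (⇑f.symm)^[t (φ n)] (x (φ n)) =
          (⇑f.symm)^[j+1] ((⇑f.symm)^[t (φ n) - (j+1)] (x (φ n))) := by
        rw [← Function.iterate_add_apply]
        congr 1
        omega
      rw [h1, iter_apply_symm_iter f (j+1)]
      exact (htmin (φ n) _ (by omega)).le
    have hfys : f ys ∈ D.alphaUnion := by
      refine absorption D hsep (f ys) fun j => ?_
      rw [← Function.iterate_succ_apply]
      exact (hforward j).trans hε'ε₀
    have hysA : ys ∈ D.alphaUnion := by
      have := mem_inv_symm_iter (alpha_inv D) hfys 1
      simpa using this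
    rw [infDist_zero_of_mem hysA] at hyinf
    linarith
  · -- exit times bounded along a subsequence
    obtain ⟨J, hJ⟩ : ∃ J, ∃ᶠ n in atTop, t n < J := by
      rw [tendsto_atTop_atTop] at hT
      push_neg at hT
      obtain ⟨J, hJ⟩ := hT
      refine ⟨J, frequently_atTop.2 fun N => ?_⟩
      obtain ⟨n, hn, hlt⟩ := hJ N
      exact ⟨n, hn, hlt⟩
    have hinf : {n | t n < J}.Infinite := Nat.frequently_atTop_iff_infinite.1 hJ
    obtain ⟨c, hc⟩ : ∃ c, {n | t n = c}.Infinite := by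
      by_contra hfin
      push_neg at hfin
      have hsub : {n | t n < J} ⊆ ⋃ c ∈ Finset.range J, {n | t n = c} := by
        intro n hn
        exact Set.mem_biUnion (Finset.mem_range.2 hn) rfl
      exact hinf (Set.Finite.subset (Set.Finite.biUnion (Finset.range J).finite_toSet
        (fun c _ => hfin c)) hsub)
    obtain ⟨ψ, hψ, hψc⟩ :=
      extraction_of_frequently_atTop (Nat.frequently_atTop_iff_infinite.2 hc)
    obtain ⟨a, -, χ, hχ, ha⟩ := isCompact_univ.tendsto_subseq
      (x := fun n => x (ψ n)) (fun n => mem_univ _)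
    have haA : a ∈ D.alphaUnion := by
      have h0 : Tendsto (fun n => infDist (x (ψ (χ n))) D.alphaUnion) atTop (𝓝 0) := by
        refine squeeze_zero (g := fun n : ℕ => ε' * (1 / ((n:ℝ)+1)))
          (fun n => infDist_nonneg) (fun n => ?_) ?_
        · have hmono : (n:ℝ) + 1 ≤ (ψ (χ n) : ℝ) + 2 := by
            have h : n ≤ ψ (χ n) := (hψ.comp hχ).le_apply
            have h2 : (n:ℝ) ≤ (ψ (χ n):ℝ) := by exact_mod_cast h
            linarith
          have hb : ε' / ((ψ (χ n) : ℝ) + 2) ≤ ε' / ((n:ℝ) + 1) :=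
            div_le_div_of_nonneg_left hε'.le (by positivity) hmono
          have := (hx (ψ (χ n))).le.trans hb
          rwa [div_eq_mul_one_div] at this
        · have := tendsto_one_div_add_atTop_nhds_zero_nat.const_mul ε'
          simpa using this
      have hlim : Tendsto (fun n => infDist (x (ψ (χ n))) D.alphaUnion) atTop
          (𝓝 (infDist a D.alphaUnion)) :=
        ((continuous_infDist_pt D.alphaUnion).tendsto a).comp ha
      have hzero : infDist a D.alphaUnion = 0 := tendsto_nhds_unique hlim h0
      rw [← (alpha_closed D).closure_eq]
      exact (mem_closure_iff_infDist_zero hAne).2 hzero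
    have hyrw : (fun n => (⇑f.symm)^[t (ψ (χ n))] (x (ψ (χ n)))) =
        fun n => (⇑f.symm)^[c] (x (ψ (χ n))) := by
      funext n
      rw [hψc (χ n)]
    have hgc : Tendsto (fun n => (⇑f.symm)^[t (ψ (χ n))] (x (ψ (χ n)))) atTop
        (𝓝 ((⇑f.symm)^[c] a)) := by
      rw [hyrw]
      exact ((iter_continuous f.symm c).tendsto a).comp ha
    have hgcA : (⇑f.symm)^[c] a ∈ D.alphaUnion := mem_inv_symm_iter (alpha_inv D) haA c
    have hfin : ε' ≤ infDist ((⇑f.symm)^[c] a) D.alphaUnion :=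
      ge_of_tendsto (((continuous_infDist_pt D.alphaUnion).tendsto _).comp hgc)
        (Eventually.of_forall fun n => ht (ψ (χ n)))
    rw [infDist_zero_of_mem hgcA] at hfin
    linarith

end SmaleAux
namespace SmaleAux
variable {X : Type*} [MetricSpace X]

/-! ### A finite-horizon Lyapunov function -/

noncomputable def phiFun (g : X → X) (A : Set X) (μ : ℝ) : ℕ → X → ℝ
  | 0 => fun z => infDist z A
  | n+1 => fun z => max (phiFun g A μ n z) (infDist (g^[n+1] z) A + ((n+1 : ℕ) : ℝ) * μ)

lemma phiFun_zero (g : X → X) (A : Set X) (μ : ℝ) (z : X) :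
    phiFun g A μ 0 z = infDist z A := rfl

lemma phiFun_succ (g : X → X) (A : Set X) (μ : ℝ) (n : ℕ) (z : X) :
    phiFun g A μ (n+1) z =
      max (phiFun g A μ n z) (infDist (g^[n+1] z) A + ((n+1 : ℕ) : ℝ) * μ) := rfl

lemma phiFun_continuous {g : X → X} (hg : Continuous g) (A : Set X) (μ : ℝ) (n : ℕ) :
    Continuous (phiFun g A μ n) := by
  induction n with
  | zero => exact continuous_infDist_pt A
  | succ m ih =>
      exact ih.max (((continuous_infDist_pt A).comp (hg.iterate (m+1))).add continuous_const)

lemma term_le_phiFun (g : X → X) (A : Set X) (μ : ℝ) {k n : ℕ} (hk : k ≤ n) (z : X) :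
    infDist (g^[k] z) A + (k : ℝ) * μ ≤ phiFun g A μ n z := by
  induction n with
  | zero =>
      obtain rfl : k = 0 := Nat.le_zero.1 hk
      simp [phiFun_zero]
  | succ m ih =>
      rw [phiFun_succ]
      rcases Nat.lt_or_ge k (m+1) with h | h
      · exact le_trans (ih (by omega)) (le_max_left _ _)
      · obtain rfl : k = m + 1 := by omega
        exact le_max_right _ _

lemma phiFun_lt (g : X → X) (A : Set X) (μ : ℝ) {n : ℕ} {z : X} {c : ℝ}
    (h : ∀ k ≤ n, infDist (g^[k] z) A + (k : ℝ) * μ < c) :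
    phiFun g A μ n z < c := by
  induction n with
  | zero => simpa [phiFun_zero] using h 0 le_rfl
  | succ m ih =>
      rw [phiFun_succ]
      exact max_lt (ih fun k hk => h k (by omega)) (h (m+1) le_rfl)

/-! ### The main construction -/

variable {f : X ≃ₜ X}

lemma construction [CompactSpace X] (D : SmaleDecomp f) (hAne : D.alphaUnion.Nonempty) :
    ∃ (U : Set X) (ε₀ ρ : ℝ), 0 < ε₀ ∧ 0 < ρ ∧
      IsTrappingRegion f.symm U ∧ attractingSetOf f.symm U = D.alphaUnion ∧
      (∀ z, infDist z D.alphaUnion < ρ → z ∈ U) ∧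
      (closure U ⊆ {z | infDist z D.alphaUnion ≤ ε₀}) ∧
      (∀ z, infDist z D.alphaUnion ≤ ε₀ → (∀ i, z ∉ D.snk i) ∧ (∀ i, z ∉ D.sad i)) := by
  obtain ⟨ε₀, hε₀, hsep⟩ := sep_exists D hAne
  obtain ⟨δs, hδs, hδsε₀, hδsprop⟩ := stability D hAne hsep ε₀ hε₀ le_rfl
  set δ₁ : ℝ := δs / 2 with hδ₁def
  have hδ₁ : 0 < δ₁ := by positivity
  have hδ₁ε₀ : δ₁ < ε₀ := by rw [hδ₁def]; linarith
  obtain ⟨δ₂, hδ₂, hδ₂lt, hδ₂prop⟩ := stability D hAne hsep (δ₁/2) (by positivity) (by linarith)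
  set K : Set X := {z | infDist z D.alphaUnion ≤ δ₁} with hKdef
  have hKcl : IsClosed K := isClosed_le (continuous_infDist_pt _) continuous_const
  have hKstay : ∀ z ∈ K, ∀ k, infDist ((⇑f.symm)^[k] z) D.alphaUnion < ε₀ := by
    intro z hz k
    exact hδsprop z (lt_of_le_of_lt hz (by rw [hδ₁def]; linarith)) k
  have hpoint : ∀ z ∈ K, ∃ n, (⇑f.symm)^[n] z ∈ {w | infDist w D.alphaUnion < δ₂} := by
    intro z hz
    have hC : limPts (⇑f.symm) z ⊆ {w | infDist w D.alphaUnion ≤ ε₀} :=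
      limPts_subset_of_eventually (isClosed_le (continuous_infDist_pt _) continuous_const)
        (Eventually.of_forall fun k => (hKstay z hz k).le)
    have hLne := limPts_nonempty (⇑f.symm) z
    rcases classify_backward D z with ⟨i, hi⟩ | ⟨i, hi⟩ | ⟨i, hi⟩
    · obtain ⟨w, hw⟩ := hLne
      exact absurd (hi hw) ((hsep w (hC hw)).1 i)
    · have htend : Tendsto (fun k => infDist ((⇑f.symm)^[k] z) D.alphaUnion) atTop (𝓝 0) := by
        refine squeeze_zero (fun k => infDist_nonneg) (fun k => ?_)
          (tendsto_infDist_of_limPts_subset hi)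
        exact infDist_le_infDist_of_subset (fun w hw => mem_iUnion.2 ⟨i, hw⟩) (D.src_nonempty i)
      obtain ⟨n, hn⟩ := (Metric.tendsto_atTop.1 htend) δ₂ hδ₂
      have := hn n le_rfl
      rw [Real.dist_eq, sub_zero, abs_of_nonneg infDist_nonneg] at this
      exact ⟨n, this⟩
    · obtain ⟨w, hw⟩ := hLne
      exact absurd (hi hw) ((hsep w (hC hw)).2 i)
  obtain ⟨N, hN⟩ := uniform_attract f.symm.continuous hKcl.isCompact
    (isOpen_lt (continuous_infDist_pt _) continuous_const) hpoint
  have hunif : ∀ z ∈ K, ∀ m, N ≤ m → infDist ((⇑f.symm)^[m] z) D.alphaUnion < δ₁/2 := by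
    intro z hz m hm
    obtain ⟨n, hnN, hn⟩ := hN z hz
    have hrw : (⇑f.symm)^[m] z = (⇑f.symm)^[m-n] ((⇑f.symm)^[n] z) := by
      rw [← Function.iterate_add_apply]
      congr 1
      omega
    rw [hrw]
    exact hδ₂prop _ hn _
  set μ : ℝ := δ₁ / (2 * (N + 2)) with hμdef
  have hμ : 0 < μ := by positivity
  have hNμ : ∀ k : ℕ, k ≤ N + 1 → (k : ℝ) * μ ≤ δ₁ / 2 := by
    intro k hk
    have hkr : (k : ℝ) ≤ (N : ℝ) + 1 := by exact_mod_cast hk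
    have hkN2 : (k:ℝ) ≤ (N:ℝ) + 2 := by linarith
    have h1 : (k:ℝ) * μ ≤ ((N:ℝ)+2) * μ := mul_le_mul_of_nonneg_right hkN2 hμ.le
    have hN2 : ((N:ℝ)+2) ≠ 0 := by positivity
    have h2 : ((N:ℝ)+2) * μ = δ₁ / 2 := by
      rw [hμdef]
      field_simp
    linarith
  set U : Set X := {z | phiFun (⇑f.symm) D.alphaUnion μ N z < δ₁} with hUdef
  have hUopen : IsOpen U :=
    isOpen_lt (phiFun_continuous f.symm.continuous _ _ _) continuous_const
  have hU0 : ∀ z ∈ U, infDist z D.alphaUnion < δ₁ := by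
    intro z hz
    have := term_le_phiFun (⇑f.symm) D.alphaUnion μ (Nat.zero_le N) z
    simp only [Function.iterate_zero, id_eq, Nat.cast_zero, zero_mul, add_zero] at this
    exact lt_of_le_of_lt this hz
  have hclU : closure U ⊆ {z | phiFun (⇑f.symm) D.alphaUnion μ N z ≤ δ₁} :=
    closure_minimal
      (fun z hz => show phiFun (⇑f.symm) D.alphaUnion μ N z ≤ δ₁ from le_of_lt hz)
      (isClosed_le (phiFun_continuous f.symm.continuous _ _ _) continuous_const)
  have hclU0 : ∀ z ∈ closure U, infDist z D.alphaUnion ≤ δ₁ := by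
    intro z hz
    have h1 := hclU hz
    have := term_le_phiFun (⇑f.symm) D.alphaUnion μ (Nat.zero_le N) z
    simp only [Function.iterate_zero, id_eq, Nat.cast_zero, zero_mul, add_zero] at this
    exact this.trans h1
  have htrap : IsTrappingRegion f.symm U := by
    refine ⟨hUopen, ?_⟩
    rintro w ⟨z, hzcl, rfl⟩
    have hzφ : phiFun (⇑f.symm) D.alphaUnion μ N z ≤ δ₁ := hclU hzcl
    have hzK : z ∈ K := hclU0 z hzcl
    show phiFun (⇑f.symm) D.alphaUnion μ N (f.symm z) < δ₁
    refine phiFun_lt _ _ _ fun k hk => ?_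
    have hit : (⇑f.symm)^[k] (f.symm z) = (⇑f.symm)^[k+1] z :=
      (Function.iterate_succ_apply (⇑f.symm) k z).symm
    rw [hit]
    rcases Nat.lt_or_ge k N with hkN | hkN
    · have hterm := term_le_phiFun (⇑f.symm) D.alphaUnion μ (show k+1 ≤ N by omega) z
      have : infDist ((⇑f.symm)^[k+1] z) D.alphaUnion + ((k+1 : ℕ) : ℝ) * μ ≤ δ₁ :=
        hterm.trans hzφ
      push_cast at this ⊢
      nlinarith [hμ]
    · have h1 : infDist ((⇑f.symm)^[k+1] z) D.alphaUnion < δ₁/2 :=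
        hunif z hzK (k+1) (by omega)
      have h2 : (k : ℝ) * μ ≤ δ₁/2 := hNμ k (by omega)
      linarith
  have hAsubU : D.alphaUnion ⊆ U := by
    intro a ha
    refine phiFun_lt _ _ _ fun k hk => ?_
    rw [infDist_zero_of_mem (mem_inv_symm_iter (alpha_inv D) ha k)]
    have := hNμ k (by omega)
    linarith
  have hWρ : ∀ z, infDist z D.alphaUnion < δ₂ → z ∈ U := by
    intro z hz
    refine phiFun_lt _ _ _ fun k hk => ?_
    have h1 : infDist ((⇑f.symm)^[k] z) D.alphaUnion < δ₁/2 := hδ₂prop z hz k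
    have h2 := hNμ k (by omega)
    linarith
  have hattr : attractingSetOf f.symm U = D.alphaUnion := by
    apply subset_antisymm
    · intro z hz
      rw [mem_attractingSetOf_iff] at hz
      simp only [Homeomorph.symm_symm] at hz
      refine absorption D hsep z fun j => ?_
      exact (le_of_lt (hU0 _ (hz j))).trans (by linarith)
    · intro a ha
      rw [mem_attractingSetOf_iff]
      intro k
      simp only [Homeomorph.symm_symm]
      exact hAsubU (mem_inv_iter (alpha_inv D) ha k)
  refine ⟨U, ε₀, δ₂, hε₀, hδ₂, htrap, hattr, hWρ, ?_, hsep⟩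
  intro z hz
  exact le_trans (hclU0 z hz) (by linarith)

end SmaleAux
namespace SmaleAux
variable {X : Type*} [MetricSpace X] {f : X ≃ₜ X}

lemma master [CompactSpace X] (D : SmaleDecomp f) (hAne : D.alphaUnion.Nonempty) :
    IsRepellingSet f D.alphaUnion ∧ IsAttractingSet f D.Aset ∧
      basinOf f.symm D.alphaUnion \ D.alphaUnion = basinOf f D.Aset \ D.Aset := by
  obtain ⟨U, ε₀, ρ, hε₀, hρ, htrap, hattr, hWρ, hclUε₀, hsep⟩ := construction D hAne
  have hAU : D.alphaUnion ⊆ U := hattr ▸ attractor_subset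
  set V : Set X := (closure U)ᶜ with hVdef
  have hVtrap : IsTrappingRegion f V := dual_trap htrap
  -- attractor of the dual region is A(f)
  have hVattr : attractingSetOf f V = D.Aset := by
    apply subset_antisymm
    · intro x hx
      rw [mem_attractingSetOf_iff] at hx
      have horb : ∀ k, (⇑f.symm)^[k] x ∈ Uᶜ := by
        intro k
        exact fun hmem => (hx k) (subset_closure hmem)
      have hLU : limPts (⇑f.symm) x ⊆ Uᶜ :=
        limPts_subset_of_eventually htrap.1.isClosed_compl (Eventually.of_forall horb)
      rcases classify_backward D x with ⟨i, hi⟩ | ⟨i, hi⟩ | ⟨i, hi⟩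
      · exact snk_subset_Aset D i (mem_snk_of_backward D hi)
      · exfalso
        obtain ⟨w, hw⟩ := limPts_nonempty (⇑f.symm) x
        exact hLU hw (hAU (mem_iUnion.2 ⟨i, hi hw⟩))
      · exact mem_Aset_of_backward_sad D hi
    · intro x hx
      rw [mem_attractingSetOf_iff]
      intro k
      simp only [hVdef, mem_compl_iff]
      intro hk
      -- the backward orbit eventually stays in U
      have hstay : ∀ m, k + 1 ≤ m → (⇑f.symm)^[m] x ∈ U := by
        intro m hm
        induction m, hm using Nat.le_induction with
        | base =>
            rw [Function.iterate_succ_apply']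
            exact htrap.2 ⟨(⇑f.symm)^[k] x, hk, rfl⟩
        | succ m hm ih =>
            rw [Function.iterate_succ_apply']
            exact trap_image_subset htrap ⟨(⇑f.symm)^[m] x, ih, rfl⟩
      have hLC : limPts (⇑f.symm) x ⊆ {z | infDist z D.alphaUnion ≤ ε₀} := by
        refine limPts_subset_of_eventually
          (isClosed_le (continuous_infDist_pt _) continuous_const) ?_
        filter_upwards [eventually_ge_atTop (k+1)] with m hm
        exact hclUε₀ (subset_closure (hstay m hm))
      obtain ⟨w, hw⟩ := limPts_nonempty (⇑f.symm) x
      rcases hx with hxs | hxu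
      · obtain ⟨i, hi⟩ := mem_iUnion.1 hxs
        exact (hsep w (hLC hw)).1 i (backward_limPts_of_mem_snk D hi hw)
      · obtain ⟨i, hi⟩ := mem_iUnion.1 hxu
        have hL2 : limPts (⇑f.symm) x ⊆ D.sad i :=
          limPts_subset_of_tendsto (D.sad_closed i) (D.sad_nonempty i) hi
        exact (hsep w (hLC hw)).2 i (hL2 hw)
  -- basin of the repeller is the complement of A(f)
  have hbasin1 : basinOf f.symm D.alphaUnion = (D.Aset)ᶜ := by
    apply subset_antisymm
    · rintro x ⟨W, ⟨hWtrap, hWattr⟩, hxW⟩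
      have hL : limPts (⇑f.symm) x ⊆ D.alphaUnion :=
        hWattr ▸ limPts_subset_attractor hWtrap hxW
      intro hxAset
      obtain ⟨w, hw⟩ := limPts_nonempty (⇑f.symm) x
      obtain ⟨j, hj⟩ := mem_iUnion.1 (hL hw)
      rcases hxAset with hxs | hxu
      · obtain ⟨i, hi⟩ := mem_iUnion.1 hxs
        exact (D.snk_src_disj i j).ne_of_mem (backward_limPts_of_mem_snk D hi hw) hj rfl
      · obtain ⟨i, hi⟩ := mem_iUnion.1 hxu
        have hL2 : limPts (⇑f.symm) x ⊆ D.sad i :=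
          limPts_subset_of_tendsto (D.sad_closed i) (D.sad_nonempty i) hi
        exact (D.src_sad_disj j i).ne_of_mem hj (hL2 hw) rfl
    · intro x hx
      rcases classify_backward D x with ⟨i, hi⟩ | ⟨i, hi⟩ | ⟨i, hi⟩
      · exact absurd (snk_subset_Aset D i (mem_snk_of_backward D hi)) hx
      · -- backward orbit converges to α̃, enters U
        have htend : Tendsto (fun k => infDist ((⇑f.symm)^[k] x) D.alphaUnion) atTop (𝓝 0) := by
          refine squeeze_zero (fun k => infDist_nonneg) (fun k => ?_)
            (tendsto_infDist_of_limPts_subset hi)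
          exact infDist_le_infDist_of_subset (fun w hw => mem_iUnion.2 ⟨i, hw⟩)
            (D.src_nonempty i)
        obtain ⟨K, hK⟩ := (Metric.tendsto_atTop.1 htend) ρ hρ
        have hKU : (⇑f.symm)^[K] x ∈ U := by
          have := hK K le_rfl
          rw [Real.dist_eq, sub_zero, abs_of_nonneg infDist_nonneg] at this
          exact hWρ _ this
        have hWtrap' := trap_pushforward htrap K
        rw [Homeomorph.symm_symm] at hWtrap'
        have hWattr' := attractor_pushforward (h := f.symm) U K
        rw [Homeomorph.symm_symm, hattr, iter_image_inv (alpha_inv D) K] at hWattr'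
        refine ⟨(⇑f)^[K] '' U, ⟨hWtrap', hWattr'⟩, ?_⟩
        exact ⟨(⇑f.symm)^[K] x, hKU, iter_apply_symm_iter f K x⟩
      · exact absurd (mem_Aset_of_backward_sad D hi) hx
  -- basin of the attractor is the complement of α̃
  have hbasin2 : basinOf f D.Aset = (D.alphaUnion)ᶜ := by
    apply subset_antisymm
    · rintro x ⟨W, ⟨hWtrap, hWattr⟩, hxW⟩
      have hL : limPts (⇑f) x ⊆ D.Aset :=
        hWattr ▸ limPts_subset_attractor hWtrap hxW
      intro hxA
      obtain ⟨i, hi⟩ := mem_iUnion.1 hxA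
      have hLsrc : limPts (⇑f) x ⊆ D.src i := forward_limPts_of_mem_src D hi
      obtain ⟨w, hw⟩ := limPts_nonempty (⇑f) x
      have hwsrc : w ∈ D.src i := hLsrc hw
      rcases hL hw with hws | hwu
      · obtain ⟨j, hj⟩ := mem_iUnion.1 hws
        exact (D.snk_src_disj j i).ne_of_mem hj hwsrc rfl
      · obtain ⟨j, hj⟩ := mem_iUnion.1 hwu
        have hL2 : limPts (⇑f.symm) w ⊆ D.sad j :=
          limPts_subset_of_tendsto (D.sad_closed j) (D.sad_nonempty j) hj
        have hL3 : limPts (⇑f.symm) w ⊆ D.src i := backward_limPts_of_mem_src D hwsrc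
        obtain ⟨v, hv⟩ := limPts_nonempty (⇑f.symm) w
        exact (D.src_sad_disj i j).ne_of_mem (hL3 hv) (hL2 hv) rfl
    · intro x hx
      have general : ∀ Λ : Set X, IsClosed Λ → Λ.Nonempty →
          (∀ z ∈ Λ, ¬ infDist z D.alphaUnion ≤ ε₀) → limPts (⇑f) x ⊆ Λ →
          x ∈ basinOf f D.Aset := by
        intro Λ hΛcl hΛne hΛsep hi
        have hdisj : Disjoint Λ {z | infDist z D.alphaUnion ≤ ε₀} :=
          Set.disjoint_left.2 fun z hz h => hΛsep z hz h
        obtain ⟨r, hr, hrth⟩ := hdisj.exists_thickenings hΛcl.isCompact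
          (isClosed_le (continuous_infDist_pt _) continuous_const)
        have htend := tendsto_infDist_of_limPts_subset hi
        obtain ⟨K, hK⟩ := (Metric.tendsto_atTop.1 htend) r hr
        have hKV : (⇑f)^[K] x ∈ V := by
          have hlt := hK K le_rfl
          rw [Real.dist_eq, sub_zero, abs_of_nonneg infDist_nonneg] at hlt
          simp only [hVdef, mem_compl_iff]
          intro hmem
          have h1 : (⇑f)^[K] x ∈ thickening r Λ :=
            (mem_thickening_iff_infDist_lt hΛne).2 hlt
          have h2 : (⇑f)^[K] x ∈ thickening r {z | infDist z D.alphaUnion ≤ ε₀} :=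
            self_subset_thickening hr _ (hclUε₀ hmem)
          exact (hrth.ne_of_mem h1 h2) rfl
        have hWtrap' := trap_pushforward hVtrap K
        have hWattr' := attractor_pushforward (h := f) V K
        rw [hVattr, symm_iter_image_inv (Aset_inv D) K] at hWattr'
        refine ⟨(⇑f.symm)^[K] '' V, ⟨hWtrap', hWattr'⟩, ?_⟩
        exact ⟨(⇑f)^[K] x, hKV, symm_iter_apply_iter f K x⟩
      rcases classify_forward D x with ⟨i, hi⟩ | ⟨i, hi⟩ | ⟨i, hi⟩
      · exact general _ (D.snk_closed i) (D.snk_nonempty i)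
          (fun z hz h => (hsep z h).1 i hz) hi
      · exact absurd (mem_iUnion.2 ⟨i, mem_src_of_forward D hi⟩) hx
      · exact general _ (D.sad_closed i) (D.sad_nonempty i)
          (fun z hz h => (hsep z h).2 i hz) hi
  refine ⟨⟨U, htrap, hattr.symm⟩, ⟨V, hVtrap, hVattr.symm⟩, ?_⟩
  rw [hbasin1, hbasin2]
  ext z
  simp only [mem_diff, mem_compl_iff]
  tauto

lemma master_empty [CompactSpace X] (D : SmaleDecomp f) (hAe : D.alphaUnion = ∅) :
    IsRepellingSet f D.alphaUnion ∧ IsAttractingSet f D.Aset ∧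
      basinOf f.symm D.alphaUnion \ D.alphaUnion = basinOf f D.Aset \ D.Aset := by
  have hAuniv : D.Aset = univ := by
    rw [eq_univ_iff_forall]
    intro x
    rcases classify_backward D x with ⟨i, hi⟩ | ⟨i, hi⟩ | ⟨i, hi⟩
    · exact snk_subset_Aset D i (mem_snk_of_backward D hi)
    · exfalso
      obtain ⟨w, hw⟩ := limPts_nonempty (⇑f.symm) x
      have : w ∈ D.alphaUnion := mem_iUnion.2 ⟨i, hi hw⟩
      rw [hAe] at this
      exact this
    · exact mem_Aset_of_backward_sad D hi
  refine ⟨⟨∅, ⟨isOpen_empty, by simp⟩, ?_⟩, ⟨univ, ⟨isOpen_univ, by simp⟩, ?_⟩, ?_⟩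
  · rw [hAe]
    simp only [attractingSetOf, Set.image_empty]
    exact (Set.iInter_const (∅ : Set X)).symm
  · rw [hAuniv]
    have h1 : ∀ k : ℕ, (⇑f)^[k] '' univ = univ := fun k => by
      rw [Set.image_univ, (iter_bijective f k).surjective.range_eq]
    have h2 : attractingSetOf f univ = univ := by
      simp only [attractingSetOf]
      rw [Set.iInter_congr h1, Set.iInter_const]
    exact h2.symm
  · rw [hAuniv, Set.diff_univ, hAe]
    have hbe : basinOf f.symm (∅ : Set X) = ∅ := by
      rw [Set.eq_empty_iff_forall_notMem]
      rintro x ⟨W, ⟨hWtrap, hWattr⟩, hxW⟩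
      obtain ⟨y, hy⟩ := trap_nonempty_attractor hWtrap ⟨x, hxW⟩
      rw [hWattr] at hy
      exact hy
    rw [hbe]
    simp

end SmaleAux

/-- Let `f` be a Smale A-homeomorphism of a closed manifold all of whose source
basic sets are trivial. Then the union `α̃(f)` of the source orbits is a repelling
set, `A(f)` is an attracting set, and `B(α̃(f)) \ α̃(f) = B(A(f)) \ A(f)`, where
the basin of the repelling set `α̃(f)` is its basin as an attracting set of `f⁻¹`. -/
theorem alpha_repelling_A_attracting_same_basin_complement
    {X : Type*} [MetricSpace X] [CompactSpace X] (f : X ≃ₜ X) (D : SmaleDecomp f)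
    (hsrc : TrivialFamily D.src) :
    IsRepellingSet f D.alphaUnion ∧ IsAttractingSet f D.Aset ∧
      basinOf f.symm D.alphaUnion \ D.alphaUnion = basinOf f D.Aset \ D.Aset := by
  rcases Set.eq_empty_or_nonempty D.alphaUnion with hAe | hAne
  · exact SmaleAux.master_empty D hAe
  · exact SmaleAux.master D hAne
end

section
/- Let f be a Smale A-homeomorphism of a closed manifold Mⁿ whose source basic sets α(f) are all trivial, and let x ∈ Mⁿ lie outside the trapping balls around the sources. If the α-limit set of x is contained in the union of saddle basic sets, then x lies in the unstable manifold of some saddle basic set; consequently x ∈ A(f). -/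
open Filter Topology Set Metric

/-- The α-limit set of `x`: subsequential limits of `f^{-k}(x)` as `k → ∞`. -/
def alphaLimitSet {X : Type*} [MetricSpace X] (f : X ≃ₜ X) (x : X) : Set X :=
  {y | ∃ φ : ℕ → ℕ, StrictMono φ ∧ Tendsto (fun n => (⇑f.symm)^[φ n] x) atTop (𝓝 y)}

/-- Let `f` be a Smale A-homeomorphism of a closed manifold whose source basic sets
are all trivial. If the α-limit set of a point `x` is contained in the union of
the saddle basic sets, then `x` lies in the unstable manifold of some saddle basic
set; consequently `x ∈ A(f)`. -/
theorem mem_unstable_of_alphaLimit_in_saddles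
    {X : Type*} [MetricSpace X] [CompactSpace X] (f : X ≃ₜ X) (D : SmaleDecomp f)
    (hsrc : TrivialFamily D.src) (x : X)
    (hx : alphaLimitSet f x ⊆ ⋃ i, D.sad i) :
    (∃ i, x ∈ unstableSetOf f (D.sad i)) ∧ x ∈ D.Aset := by
  classical
  set g : X → X := ⇑f.symm with hg
  set S : ℕ → X := fun k => g^[k] x with hS
  set A : Set X := alphaLimitSet f x with hA
  -- invariance of saddles under g
  have hinv : ∀ i, ∀ p ∈ D.sad i, g p ∈ D.sad i := by
    intro i p hp
    rw [← D.sad_inv i] at hp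
    rcases hp with ⟨q, hq, rfl⟩
    simpa [g] using hq
  -- A is nonempty
  obtain ⟨y, -, φ, hφ, hty⟩ := isCompact_univ.tendsto_subseq (x := S) fun n => mem_univ _
  have hyA : y ∈ A := ⟨φ, hφ, hty⟩
  obtain ⟨i₀, hyi₀⟩ := mem_iUnion.mp (hx hyA)
  have hAne : A.Nonempty := ⟨y, hyA⟩
  -- the backward orbit converges to A
  have hdistA : Tendsto (fun k => infDist (S k) A) atTop (𝓝 0) := by
    by_contra hcon
    rw [Metric.tendsto_atTop] at hcon
    push_neg at hcon
    obtain ⟨ε, hε, hfreq⟩ := hcon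
    obtain ⟨ψ, hψ, hψε⟩ := Nat.exists_strictMono_subsequence
      (P := fun n => ε ≤ dist (infDist (S n) A) 0) (fun N => by
        obtain ⟨n, hn, h⟩ := hfreq (N + 1); exact ⟨n, by omega, h⟩)
    obtain ⟨z, -, ρ, hρ, htz⟩ :=
      isCompact_univ.tendsto_subseq (x := fun n => S (ψ n)) fun n => mem_univ _
    have hzA : z ∈ A := ⟨ψ ∘ ρ, hψ.comp hρ, htz⟩
    have h1 : Tendsto (fun n => infDist (S (ψ (ρ n))) A) atTop (𝓝 (infDist z A)) :=
      ((continuous_infDist_pt A).tendsto z).comp htz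
    have h2 : infDist z A = 0 := infDist_zero_of_mem hzA
    have h3 : ∀ n, ε ≤ infDist (S (ψ (ρ n))) A := fun n => by
      have := hψε (ρ n)
      rwa [Real.dist_eq, sub_zero, abs_of_nonneg infDist_nonneg] at this
    have := ge_of_tendsto h1 (Eventually.of_forall h3)
    rw [h2] at this; linarith
  -- separate `sad i₀` from the other saddles
  set T : Set X := ⋃ j : {j : Fin D.c // j ≠ i₀}, D.sad j with hTdef
  have hTclosed : IsClosed T := isClosed_iUnion_of_finite fun j => D.sad_closed j
  have hTdisj : Disjoint (D.sad i₀) T := by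
    refine Set.disjoint_iUnion_right.mpr fun j => ?_
    exact D.sad_pairwise (Ne.symm j.2)
  obtain ⟨ε, hε, hdisj⟩ :=
    hTdisj.exists_thickenings ((D.sad_closed i₀).isCompact) hTclosed
  -- modulus of continuity for g
  have hgu : UniformContinuous g :=
    CompactSpace.uniformContinuous_of_continuous f.symm.continuous
  rw [Metric.uniformContinuous_iff] at hgu
  obtain ⟨δ₀, hδ₀, hδg⟩ := hgu ε hε
  set δ : ℝ := min δ₀ (ε / 2) with hδdef
  have hδpos : 0 < δ := lt_min hδ₀ (by linarith)
  have hδε : δ < ε := lt_of_le_of_lt (min_le_right _ _) (by linarith)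
  have hδδ₀ : δ ≤ δ₀ := min_le_left _ _
  -- covering
  have hcover : (⋃ i, D.sad i) ⊆ D.sad i₀ ∪ T := by
    intro p hp
    rcases mem_iUnion.mp hp with ⟨j, hj⟩
    by_cases h : j = i₀
    · exact Or.inl (h ▸ hj)
    · exact Or.inr (mem_iUnion.mpr ⟨⟨j, h⟩, hj⟩)
  -- eventually the backward orbit is δ-close to the saddles
  have hUne : (⋃ i, D.sad i).Nonempty := ⟨y, mem_iUnion.mpr ⟨i₀, hyi₀⟩⟩
  have hmem : ∀ᶠ k in atTop, S k ∈ thickening δ (D.sad i₀) ∪ thickening δ T := by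
    have hev : ∀ᶠ k in atTop, infDist (S k) A < δ := by
      have := (hdistA.eventually (gt_mem_nhds hδpos))
      exact this
    filter_upwards [hev] with k hk
    have h1 : infDist (S k) (⋃ i, D.sad i) < δ :=
      lt_of_le_of_lt (infDist_le_infDist_of_subset hx hAne) hk
    have h2 : S k ∈ thickening δ (⋃ i, D.sad i) :=
      (mem_thickening_iff_infDist_lt hUne).mpr h1
    rcases mem_thickening_iff.mp h2 with ⟨z, hz, hdz⟩
    rcases hcover hz with hz' | hz'
    · exact Or.inl (mem_thickening_iff.mpr ⟨z, hz', hdz⟩)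
    · exact Or.inr (mem_thickening_iff.mpr ⟨z, hz', hdz⟩)
  obtain ⟨N, hN⟩ := eventually_atTop.mp hmem
  -- the step lemma: once δ-close to sad i₀, stays ε-close after one step
  have hstep : ∀ k, S k ∈ thickening δ (D.sad i₀) → S (k + 1) ∈ thickening ε (D.sad i₀) := by
    intro k hk
    rcases mem_thickening_iff.mp hk with ⟨z, hz, hdz⟩
    have : S (k + 1) = g (S k) := Function.iterate_succ_apply' g k x
    rw [this]
    exact mem_thickening_iff.mpr ⟨g z, hinv i₀ z hz, hδg (lt_of_lt_of_le hdz hδδ₀)⟩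
  -- find an entrance time K ≥ N
  have hev2 : ∀ᶠ n in atTop, dist (S (φ n)) y < δ :=
    hty.eventually (Metric.ball_mem_nhds y hδpos)
  obtain ⟨m, hm⟩ := eventually_atTop.mp hev2
  set K : ℕ := φ (max m N) with hKdef
  have hKN : N ≤ K := le_trans (le_max_right m N) (hφ.id_le _)
  have hKmem : S K ∈ thickening δ (D.sad i₀) :=
    mem_thickening_iff.mpr ⟨y, hyi₀, hm _ (le_max_left m N)⟩
  -- the tail stays δ-close to sad i₀
  have htail : ∀ k, K ≤ k → S k ∈ thickening δ (D.sad i₀) := by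
    intro k hk
    induction k, hk using Nat.le_induction with
    | base => exact hKmem
    | succ k hk ih =>
      have h1 := hstep k ih
      have h2 := hN (k + 1) (by omega)
      rcases h2 with h | h
      · exact h
      · exact absurd h1 (disjoint_right.mp hdisj (thickening_mono hδε.le T h))
  -- A ⊆ sad i₀
  have hAsub : A ⊆ D.sad i₀ := by
    intro z hz
    obtain ⟨j, hzj⟩ := mem_iUnion.mp (hx hz)
    by_cases hji : j = i₀
    · exact hji ▸ hzj
    · exfalso
      obtain ⟨ψ, hψ, htz⟩ := hz
      have hle : infDist z (D.sad i₀) ≤ δ := by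
        have h1 : Tendsto (fun n => infDist (S (ψ n)) (D.sad i₀)) atTop
            (𝓝 (infDist z (D.sad i₀))) :=
          ((continuous_infDist_pt (D.sad i₀)).tendsto z).comp htz
        refine le_of_tendsto h1 (eventually_atTop.mpr ⟨K, fun n hn => ?_⟩)
        have := htail (ψ n) (le_trans hn (hψ.id_le n))
        exact le_of_lt ((mem_thickening_iff_infDist_lt ⟨y, hyi₀⟩).mp this)
      have hzthick : z ∈ thickening ε (D.sad i₀) :=
        (mem_thickening_iff_infDist_lt ⟨y, hyi₀⟩).mpr (lt_of_le_of_lt hle hδε)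
      have hzT : z ∈ thickening ε T :=
        self_subset_thickening hε T (mem_iUnion.mpr ⟨⟨j, hji⟩, hzj⟩)
      exact disjoint_left.mp hdisj hzthick hzT
  -- conclude
  have hxu : x ∈ unstableSetOf f (D.sad i₀) := by
    show Tendsto (fun k => infDist ((⇑f.symm)^[k] x) (D.sad i₀)) atTop (𝓝 0)
    have : ∀ k, infDist (S k) (D.sad i₀) ≤ infDist (S k) A := fun k =>
      infDist_le_infDist_of_subset hAsub hAne
    exact squeeze_zero (fun k => infDist_nonneg) this hdistA
  exact ⟨⟨i₀, hxu⟩, Or.inr (mem_iUnion.mpr ⟨i₀, hxu⟩)⟩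
end
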